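/- For any mixed graph G = (V, E, A), the counting function χ_G(k) (the number of weak proper k-colorings of G) agrees with a polynomial in k of degree at most |V| for all positive integers k. -/

import Mathlib

/-- A mixed graph on vertex set `V`: `E` are the undirected edges (a pair `{u,v}`
may be recorded as `E u v` or `E v u`), `A` are the arcs (directed edges). -/
structure MixedGraph (V : Type*) where
  E : V → V → Prop
  A : V → V → Prop

/-- A weak proper coloring: distinct colors along edges, weakly increasing along arcs. -/
def MixedGraph.IsWeakColoring {V : Type*} (G : MixedGraph V) {k : ℕ} (c : V → Fin k) : Prop :=
  (∀ u v, G.E u v → c u ≠ c v) ∧ (∀ u v, G.A u v → c u ≤ c v)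

/-- The weak chromatic counting function: the number of weak proper `k`-colorings. -/
noncomputable def MixedGraph.weakChi {V : Type*} (G : MixedGraph V) (k : ℕ) : ℕ :=
  Nat.card {c : V → Fin k // G.IsWeakColoring c}

/-- `O` is an orientation of the mixed graph `G`: it contains all arcs, orients every
undirected edge in exactly one of the two directions, and contains nothing else. -/
def MixedGraph.IsOrientation {V : Type*} (G : MixedGraph V) (O : V → V → Prop) : Prop :=
  (∀ u v, G.A u v → O u v) ∧
  (∀ u v, G.E u v → (O u v ↔ ¬ O v u)) ∧
  (∀ u v, O u v → G.A u v ∨ G.E u v ∨ G.E v u)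

/-- A relation is acyclic if it admits no directed cycle. -/
def IsAcyclicRel {V : Type*} (O : V → V → Prop) : Prop :=
  ∀ v, ¬ Relation.TransGen O v v

/-- A mixed graph is acyclic if all of its orientations are acyclic. -/
def MixedGraph.Acyclic {V : Type*} (G : MixedGraph V) : Prop :=
  ∀ O : V → V → Prop, G.IsOrientation O → IsAcyclicRel O

/-- A coloring `c` is intercompatible with an orientation `O` of `G` if for every `u → v`
in `O` we have `c u ≤ c v` when `uv` is an undirected edge of `G`, and `c u < c v`
when `u → v` is an arc of `G`. -/
def MixedGraph.Intercompatible {V : Type*} (G : MixedGraph V) (O : V → V → Prop)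
    {k : ℕ} (c : V → Fin k) : Prop :=
  ∀ u v, O u v → ((G.E u v ∨ G.E v u) → c u ≤ c v) ∧ (G.A u v → c u < c v)

open Finset Polynomial

/-- Number of surjective weak colorings with exactly `m` colors. -/
noncomputable def MixedGraph.surjCount {V : Type*} [Fintype V] (G : MixedGraph V) (m : ℕ) : ℕ :=
  Nat.card {c : V → Fin m // G.IsWeakColoring c ∧ Function.Surjective c}

lemma MixedGraph.surjCount_eq_zero {V : Type*} [Fintype V] (G : MixedGraph V) {m : ℕ}
    (hm : Fintype.card V < m) : G.surjCount m = 0 := by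
  have : IsEmpty {c : V → Fin m // G.IsWeakColoring c ∧ Function.Surjective c} := by
    constructor
    rintro ⟨c, _, hs⟩
    have := Fintype.card_le_of_surjective c hs
    simp only [Fintype.card_fin] at this
    omega
  simp [MixedGraph.surjCount, Nat.card_of_isEmpty]

/-- Weak colorings with image `S` correspond to surjective weak colorings onto
`Fin S.card`, via the order isomorphism `Fin S.card ≃o S`. -/
noncomputable def MixedGraph.fiberEquiv {V : Type*} [Fintype V] (G : MixedGraph V) {k : ℕ}
    (S : Finset (Fin k)) :
    {c : V → Fin k // G.IsWeakColoring c ∧ Finset.image c Finset.univ = S} ≃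
    {c : V → Fin S.card // G.IsWeakColoring c ∧ Function.Surjective c} where
  toFun := fun ⟨c, hc, hS⟩ =>
    ⟨fun v => (S.orderIsoOfFin rfl).symm
        ⟨c v, hS ▸ Finset.mem_image_of_mem c (Finset.mem_univ v)⟩, by
      constructor
      · constructor
        · intro u v huv hne
          exact hc.1 u v huv (by
            have := congrArg (fun x => ((S.orderIsoOfFin rfl) x : Fin k)) hne
            simpa using this)
        · intro u v huv
          exact (S.orderIsoOfFin rfl).symm.monotone (Subtype.mk_le_mk.2 (hc.2 u v huv))
      · intro j
        obtain ⟨v, _, hv⟩ := Finset.mem_image.1 (by rw [hS]; exact ((S.orderIsoOfFin rfl) j).2)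
        refine ⟨v, ?_⟩
        have : (⟨c v, hS ▸ Finset.mem_image_of_mem c (Finset.mem_univ v)⟩ : {x // x ∈ S}) =
            (S.orderIsoOfFin rfl) j := Subtype.ext hv
        simp only [this, OrderIso.symm_apply_apply]⟩
  invFun := fun ⟨c, hc, hs⟩ =>
    ⟨fun v => ((S.orderIsoOfFin rfl) (c v) : Fin k), by
      constructor
      · constructor
        · intro u v huv hne
          exact hc.1 u v huv ((S.orderIsoOfFin rfl).injective (Subtype.coe_injective hne))
        · intro u v huv
          exact Subtype.coe_le_coe.2 ((S.orderIsoOfFin rfl).monotone (hc.2 u v huv))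
      · ext x
        simp only [Finset.mem_image, Finset.mem_univ, true_and]
        constructor
        · rintro ⟨v, rfl⟩
          exact ((S.orderIsoOfFin rfl) (c v)).2
        · intro hx
          obtain ⟨j, hj⟩ := (S.orderIsoOfFin rfl).surjective ⟨x, hx⟩
          obtain ⟨v, hv⟩ := hs j
          exact ⟨v, by rw [hv, hj]⟩⟩
  left_inv := fun ⟨c, hc, hS⟩ => by
    apply Subtype.ext
    funext v
    simp [OrderIso.apply_symm_apply]
  right_inv := fun ⟨c, hc, hs⟩ => by
    apply Subtype.ext
    funext v
    have : (⟨((S.orderIsoOfFin rfl) (c v) : Fin k),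
        ((S.orderIsoOfFin rfl) (c v)).2⟩ : {x // x ∈ S}) = (S.orderIsoOfFin rfl) (c v) :=
      Subtype.ext rfl
    simp only [this, OrderIso.symm_apply_apply]

lemma MixedGraph.weakChi_eq {V : Type*} [Fintype V] (G : MixedGraph V) (k : ℕ) :
    G.weakChi k = ∑ m ∈ Finset.range (k + 1), k.choose m * G.surjCount m := by
  classical
  have e1 : {c : V → Fin k // G.IsWeakColoring c} ≃
      Σ S : Finset (Fin k), {c : V → Fin S.card // G.IsWeakColoring c ∧ Function.Surjective c} := by
    refine (Equiv.sigmaFiberEquiv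
      (fun c : {c : V → Fin k // G.IsWeakColoring c} =>
        Finset.image c.1 Finset.univ)).symm.trans ?_
    refine Equiv.sigmaCongrRight fun S => ?_
    exact (Equiv.subtypeSubtypeEquivSubtypeInter _ _).trans (G.fiberEquiv S)
  have h1 : G.weakChi k = ∑ S : Finset (Fin k), G.surjCount S.card := by
    rw [MixedGraph.weakChi, Nat.card_congr e1]
    letI : ∀ S : Finset (Fin k),
        Fintype {c : V → Fin S.card // G.IsWeakColoring c ∧ Function.Surjective c} :=
      fun S => Fintype.ofFinite _
    rw [Nat.card_eq_fintype_card, Fintype.card_sigma]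
    exact Finset.sum_congr rfl fun S _ => (Nat.card_eq_fintype_card).symm
  rw [h1]
  have h2 : ∑ S : Finset (Fin k), G.surjCount S.card
      = ∑ S ∈ (Finset.univ : Finset (Fin k)).powerset, G.surjCount S.card := by
    rw [Finset.powerset_univ]
  rw [h2, Finset.sum_powerset_apply_card]
  simp [Finset.card_univ, mul_comm]

/-- The weak chromatic counting function of a mixed graph agrees, for all positive
integers `k`, with a polynomial of degree at most `|V|`. -/
theorem stmt18 {V : Type*} [Fintype V] (G : MixedGraph V) :
    ∃ p : Polynomial ℚ, p.natDegree ≤ Fintype.card V ∧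
      ∀ k : ℕ, 0 < k → p.eval (k : ℚ) = G.weakChi k := by
  classical
  set n := Fintype.card V with hn
  refine ⟨∑ m ∈ Finset.range (n + 1),
    Polynomial.C ((G.surjCount m : ℚ) / m.factorial) * descPochhammer ℚ m, ?_, ?_⟩
  · refine Polynomial.natDegree_sum_le_of_forall_le _ _ fun m hm => ?_
    calc (Polynomial.C ((G.surjCount m : ℚ) / m.factorial) * descPochhammer ℚ m).natDegree
        ≤ (descPochhammer ℚ m).natDegree := Polynomial.natDegree_C_mul_le _ _
      _ = m := descPochhammer_natDegree (R := ℚ) m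
      _ ≤ n := by have := Finset.mem_range.1 hm; omega
  · intro k _
    have hterm : ∀ m : ℕ,
        Polynomial.eval (k : ℚ) (Polynomial.C ((G.surjCount m : ℚ) / m.factorial)
          * descPochhammer ℚ m) = (k.choose m * G.surjCount m : ℕ) := by
      intro m
      rw [Polynomial.eval_mul, Polynomial.eval_C, descPochhammer_eval_eq_descFactorial,
        Nat.descFactorial_eq_factorial_mul_choose]
      have hfac : (m.factorial : ℚ) ≠ 0 := by
        exact_mod_cast m.factorial_ne_zero
      push_cast
      field_simp
    rw [Polynomial.eval_finset_sum]
    simp only [hterm]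
    rw [G.weakChi_eq k]
    -- extend both sums to `range (max n k + 1)`
    have key : ∀ N : ℕ, n ≤ N → k ≤ N →
        (∑ m ∈ Finset.range (n + 1), ((k.choose m * G.surjCount m : ℕ) : ℚ))
          = ∑ m ∈ Finset.range (k + 1), ((k.choose m * G.surjCount m : ℕ) : ℚ) := by
      intro N hnN hkN
      rw [Finset.sum_subset (Finset.range_subset_range.2 (by omega) :
            Finset.range (n + 1) ⊆ Finset.range (N + 1)),
          Finset.sum_subset (Finset.range_subset_range.2 (by omega) :
            Finset.range (k + 1) ⊆ Finset.range (N + 1))]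
      · intro m _ hm
        have hk : k < m := by simp only [Finset.mem_range] at hm; omega
        rw [Nat.choose_eq_zero_of_lt hk]
        simp
      · intro m _ hm
        have hv : n < m := by simp only [Finset.mem_range] at hm; omega
        rw [G.surjCount_eq_zero (hn ▸ hv)]
        simp
    rw [key (max n k) (le_max_left _ _) (le_max_right _ _)]
    push_cast
    ring
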